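/- Let X be a compact Ptolemy space with properties (E) and (sI), ω ∈ X, ℓ ⊂ X_ω = X \ {ω} a Ptolemy line with unit speed parameterization c : ℝ → X_ω, and b⁺, b⁻ the two opposite Busemann functions of ℓ normalized so that b⁺(c(t)) = −t and b⁻(c(t)) = t. Then b⁺ + b⁻ ≡ 0 on X_ω, i.e., X is Busemann flat along ℓ. -/

import Mathlib

/-- Projective equality of triples of reals, i.e. equality in `ℝP²`. -/
def ProjEq (a b : ℝ × ℝ × ℝ) : Prop :=
  ∃ c : ℝ, 0 < c ∧ b.1 = c * a.1 ∧ b.2.1 = c * a.2.1 ∧ b.2.2 = c * a.2.2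

/-- A quadruple is admissible if no entry occurs three or four times. -/
def Admissible {X : Type*} (x y z u : X) : Prop :=
  ¬ ((x = y ∧ y = z) ∨ (x = y ∧ y = u) ∨ (x = z ∧ z = u) ∨ (y = z ∧ z = u))

open scoped Classical in
/-- The cross-ratio triple of a quadruple with respect to an extended metric `d` with
infinitely remote point `ω`, with the standard conventions when `ω` occurs among the
entries: e.g. `crt(x,y,z,ω) = (d(x,y) : d(x,z) : d(y,z))` and `crt(x,y,ω,ω) = (0:1:1)`. -/
noncomputable def crt {X : Type*} (d : X → X → ℝ) (ω x y z u : X) : ℝ × ℝ × ℝ :=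
  if x = ω then
    (if y = ω then ((0 : ℝ), 1, 1) else if z = ω then ((1 : ℝ), 0, 1)
      else if u = ω then ((1 : ℝ), 1, 0) else (d z u, d y u, d y z))
  else if y = ω then
    (if z = ω then ((1 : ℝ), 1, 0) else if u = ω then ((1 : ℝ), 0, 1)
      else (d z u, d x z, d x u))
  else if z = ω then
    (if u = ω then ((0 : ℝ), 1, 1) else (d x y, d y u, d x u))
  else if u = ω then (d x y, d x z, d y z)
  else (d x y * d z u, d x z * d y u, d x u * d y z)


/-- A Möbius structure on a compact space `X`: for every point `ω` a metric
`dist ω : X → X → ℝ` on `X \ {ω}` having `ω` as infinitely remote point, all metrics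
pairwise Möbius equivalent, each satisfying the Ptolemy inequality, and compatible
with the topology of `X`. -/
structure MoebiusStructure (X : Type*) [TopologicalSpace X] where
  dist : X → X → X → ℝ
  dist_self : ∀ ω x, dist ω x x = 0
  dist_comm : ∀ ω x y, dist ω x y = dist ω y x
  dist_pos : ∀ ω x y, x ≠ ω → y ≠ ω → x ≠ y → 0 < dist ω x y
  dist_triangle : ∀ ω x y z, x ≠ ω → y ≠ ω → z ≠ ω →
    dist ω x z ≤ dist ω x y + dist ω y z
  ptolemy : ∀ ω x y z u, x ≠ ω → y ≠ ω → z ≠ ω → u ≠ ω →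
    dist ω x z * dist ω y u ≤ dist ω x y * dist ω z u + dist ω x u * dist ω y z
  moebius_equivalent : ∀ ω ω' x y z u, Admissible x y z u →
    ProjEq (crt (dist ω) ω x y z u) (crt (dist ω') ω' x y z u)
  isOpen_ball : ∀ ω x r, x ≠ ω → IsOpen {y | y ≠ ω ∧ dist ω x y < r}
  isOpen_compl_closedBall : ∀ ω x r, x ≠ ω →
    IsOpen ({y | y ≠ ω ∧ r < dist ω x y} ∪ {ω})
  nhds_basis : ∀ ω x, x ≠ ω → ∀ U ∈ nhds x, ∃ r > 0, {y | y ≠ ω ∧ dist ω x y < r} ⊆ U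

namespace MoebiusStructure

variable {X : Type*} [TopologicalSpace X] (S : MoebiusStructure X)

/-- A Möbius map of `(X, S)`: preserves all cross-ratio triples. -/
def IsMoebiusMap (φ : X → X) : Prop :=
  ∀ ω x y z u, Admissible x y z u →
    ProjEq (crt (S.dist ω) ω x y z u) (crt (S.dist ω) ω (φ x) (φ y) (φ z) (φ u))

/-- `(x,z)` separates `(y,u)` on `σ`: `y` and `u` lie in different connected components
of `σ \ {x,z}`. -/
def Separates (σ : Set X) (x z y u : X) : Prop :=
  ∀ C : Set X, IsPreconnected C → C ⊆ σ \ {x, z} → ¬(y ∈ C ∧ u ∈ C)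

/-- A Ptolemy circle: a subset homeomorphic to `S¹` on which the Ptolemy equality holds
for every quadruple of distinct points with separated diagonal. -/
def IsPtolemyCircle (σ : Set X) : Prop :=
  Nonempty (σ ≃ₜ Metric.sphere (0 : ℂ) 1) ∧
    ∀ ω, ∀ x ∈ σ, ∀ y ∈ σ, ∀ z ∈ σ, ∀ u ∈ σ,
      x ≠ ω → y ≠ ω → z ≠ ω → u ≠ ω →
      x ≠ y → x ≠ z → x ≠ u → y ≠ z → y ≠ u → z ≠ u →
      Separates σ x z y u →
      S.dist ω x z * S.dist ω y u =
        S.dist ω x y * S.dist ω z u + S.dist ω x u * S.dist ω y z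

/-- A Ptolemy line in `X_ω`: a Ptolemy circle through `ω` with `ω` removed. -/
def IsPtolemyLine (ω : X) (ℓ : Set X) : Prop :=
  ∃ σ : Set X, S.IsPtolemyCircle σ ∧ ω ∈ σ ∧ ℓ = σ \ {ω}

/-- A metric sphere between `ω` and `ω'`: a sphere of positive radius centered at `ω`
for the metric with infinitely remote point `ω'`. -/
def IsSphereBetween (ω ω' : X) (Sp : Set X) : Prop :=
  ∃ r : ℝ, 0 < r ∧ Sp = {x | x ≠ ω' ∧ S.dist ω' ω x = r}

/-- A strong space inversion w.r.t. `ω`, `ω'` and a metric sphere `Sp` between them: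
a Möbius involution swapping `ω` and `ω'`, fixing `Sp` pointwise, and preserving every
Ptolemy circle through `ω` and `ω'`. -/
def IsStrongInversion (ω ω' : X) (Sp : Set X) (φ : X → X) : Prop :=
  S.IsMoebiusMap φ ∧ Function.Bijective φ ∧ φ ∘ φ = id ∧
    φ ω = ω' ∧ φ ω' = ω ∧ (∀ x ∈ Sp, φ x = x) ∧
    ∀ σ : Set X, S.IsPtolemyCircle σ → ω ∈ σ → ω' ∈ σ → φ '' σ = σ

/-- Property (E): existence of a Ptolemy circle. -/
def PropE : Prop := ∃ σ : Set X, S.IsPtolemyCircle σ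

/-- Property (sI): existence of strong space inversions for every pair of distinct points
and every metric sphere between them. -/
def PropSI : Prop :=
  ∀ ω ω' : X, ω ≠ ω' → ∀ Sp : Set X, S.IsSphereBetween ω ω' Sp →
    ∃ φ : X → X, S.IsStrongInversion ω ω' Sp φ

end MoebiusStructure

open Filter Topology

lemma bus_pigeon (g : ℕ → ℝ) (hg : ∀ i, g i ≤ g (i+1)) (k : ℕ) (hk : 0 < k) :
    ∃ j < k, (k : ℝ) * (g (2*j+1) - g (2*j)) ≤ g (2*k) - g 0 := by
  have hmono : Monotone g := monotone_nat_of_le_succ hg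
  have hsum : ∀ n : ℕ, ∑ j ∈ Finset.range n, (g (2*j+1) - g (2*j)) ≤ g (2*n) - g 0 := by
    intro n
    induction n with
    | zero => simp
    | succ m ih =>
      rw [Finset.sum_range_succ]
      have h1 : g (2*m) ≤ g (2*m+1) := hg _
      have h2 : g (2*m+1) ≤ g (2*(m+1)) := by
        have := hg (2*m+1); simpa [mul_add] using this
      have := ih
      nlinarith [hmono (show 2*m ≤ 2*(m+1) by omega)]
  by_contra h
  push_neg at h
  have hlt : ∑ j ∈ Finset.range k, (g (2*k) - g 0) / (k:ℝ) <
      ∑ j ∈ Finset.range k, (g (2*j+1) - g (2*j)) := by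
    apply Finset.sum_lt_sum_of_nonempty
    · exact ⟨0, Finset.mem_range.2 hk⟩
    · intro j hj
      have := h j (Finset.mem_range.1 hj)
      rw [div_lt_iff₀ (by exact_mod_cast hk)]
      linarith
  rw [Finset.sum_const, Finset.card_range, nsmul_eq_mul] at hlt
  have hkpos : (0:ℝ) < k := by exact_mod_cast hk
  have : (k:ℝ) * ((g (2*k) - g 0) / k) = g (2*k) - g 0 := by field_simp
  rw [this] at hlt
  linarith [hsum k]

lemma bus_inversion {X : Type*} [TopologicalSpace X] (S : MoebiusStructure X) (hSI : S.PropSI)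
    (ω : X) (σ : Set X) (hσ : S.IsPtolemyCircle σ) (hω : ω ∈ σ)
    (c : ℝ → X) (hrange : Set.range c = σ \ {ω})
    (hunit : ∀ s t : ℝ, S.dist ω (c s) (c t) = |s - t|)
    (x : X) (hx : x ≠ ω) (hxl : x ∉ Set.range c)
    (r : ℝ) (hr : 0 < r) :
    ∃ y : X, y ≠ ω ∧ ∀ τ : ℝ, τ ≠ r →
      S.dist ω y (c τ) = S.dist ω x (c (r + r^2/(τ - r))) * |τ - r| / S.dist ω x (c r) := by
  have hcm : ∀ t : ℝ, c t ∈ σ ∧ c t ≠ ω := by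
    intro t
    have : c t ∈ Set.range c := ⟨t, rfl⟩
    rw [hrange] at this
    exact ⟨this.1, this.2⟩
  have hcinj : ∀ s t : ℝ, c s = c t → s = t := by
    intro s t h
    have h0 : S.dist ω (c s) (c t) = 0 := by rw [h, S.dist_self]
    rw [hunit] at h0
    have := abs_eq_zero.1 h0
    linarith
  set p := c r with hp
  have hpω : p ≠ ω := (hcm r).2
  have hωp : ω ≠ p := hpω.symm
  have hxp : x ≠ p := fun h => hxl ⟨r, h.symm⟩
  have hdcp : ∀ t : ℝ, S.dist ω (c t) p = |t - r| := fun t => hunit t r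
  -- the constant lam
  have key : ∀ u v : X, u ≠ ω → u ≠ p → v ≠ ω → v ≠ p → u ≠ v →
      S.dist p ω u * S.dist ω u p = S.dist p ω v * S.dist ω v p := by
    intro u v huω hup hvω hvp huv
    have hadm : Admissible u v ω p := by
      simp only [Admissible, not_or]
      refine ⟨?_, ?_, ?_, ?_⟩ <;> rintro ⟨h1, h2⟩
      · exact huv h1
      · exact huv h1
      · exact huω h1
      · exact hvω h1
    have hPE := S.moebius_equivalent ω p u v ω p hadm
    have e1 : crt (S.dist ω) ω u v ω p = (S.dist ω u v, S.dist ω v p, S.dist ω u p) := by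
      simp [crt, huω, hvω, hpω]
    have e2 : crt (S.dist p) p u v ω p = (S.dist p u v, S.dist p u ω, S.dist p v ω) := by
      simp [crt, hup, hvp, hωp]
    rw [e1, e2] at hPE
    obtain ⟨e, he, h1, h2, h3⟩ := hPE
    simp only at h1 h2 h3
    rw [S.dist_comm p ω u, S.dist_comm p ω v, h2, h3]
    ring
  have hc0ω : c 0 ≠ ω := (hcm 0).2
  have hc0p : c 0 ≠ p := by
    intro h
    have := hcinj 0 r h
    linarith
  set lam := S.dist p ω (c 0) * S.dist ω (c 0) p with hlam
  have hlampos : 0 < lam := by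
    apply mul_pos
    · exact S.dist_pos p ω (c 0) hωp hc0p (Ne.symm hc0ω)
    · exact S.dist_pos ω (c 0) p hc0ω hpω hc0p
  have Hlam : ∀ u : X, u ≠ ω → u ≠ p → S.dist p ω u * S.dist ω u p = lam := by
    intro u h1 h2
    by_cases h : u = c 0
    · rw [h]
    · exact key u (c 0) h1 h2 hc0ω hc0p h
  set ρ := lam / r with hρ
  have hρpos : 0 < ρ := div_pos hlampos hr
  obtain ⟨φ, hMoeb, hbij, hinvol, hφω, hφp, hfixSp, hcirc⟩ :=
    hSI ω p hωp _ ⟨ρ, hρpos, rfl⟩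
  have hφinj : Function.Injective φ := hbij.1
  -- fixed points c 0 and c (2r)
  have hsphere : ∀ t : ℝ, |t - r| = r → φ (c t) = c t := by
    intro t ht
    have hctp : c t ≠ p := by
      intro h
      have := hcinj t r h
      rw [this] at ht
      simp at ht
      linarith
    apply hfixSp
    refine ⟨hctp, ?_⟩
    have := Hlam (c t) (hcm t).2 hctp
    rw [hdcp t, ht] at this
    rw [hρ]
    field_simp
    linarith [this]
  have hfix0 : φ (c 0) = c 0 := by
    apply hsphere
    rw [abs_of_nonpos (by linarith)]
    ring
  have hfix2 : φ (c (2*r)) = c (2*r) := by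
    apply hsphere
    rw [abs_of_nonneg (by linarith)]
    ring
  have hφne : ∀ t : ℝ, t ≠ r → φ (c t) ≠ ω := by
    intro t ht h
    have : φ (c t) = φ p := by rw [h, hφp]
    exact ht (hcinj t r (hφinj this))
  have hφmem : ∀ t : ℝ, φ (c t) ∈ σ := by
    intro t
    have himg := hcirc σ hσ hω (by rw [hp] at *; exact (hcm r).1)
    rw [← himg]
    exact ⟨c t, (hcm t).1, rfl⟩
  have hφc : ∀ t : ℝ, t ≠ r → ∃ s : ℝ, φ (c t) = c s := by
    intro t ht
    have : φ (c t) ∈ Set.range c := by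
      rw [hrange]
      exact ⟨hφmem t, hφne t ht⟩
    obtain ⟨s, hs⟩ := this
    exact ⟨s, hs.symm⟩
  -- Claim A
  have hMB : ∀ u v : X, u ≠ ω → u ≠ p → v ≠ ω → v ≠ p → u ≠ v →
      ∃ e : ℝ, 0 < e ∧ S.dist ω (φ u) (φ v) = e * S.dist ω u v ∧
        S.dist ω (φ v) p = e * S.dist ω u p ∧ S.dist ω (φ u) p = e * S.dist ω v p := by
    intro u v huω hup hvω hvp huv
    have hadm : Admissible u v p ω := by
      simp only [Admissible, not_or]
      refine ⟨?_, ?_, ?_, ?_⟩ <;> rintro ⟨h1, h2⟩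
      · exact huv h1
      · exact huv h1
      · exact hpω h2
      · exact hpω h2
    have hPE := hMoeb ω u v p ω hadm
    have hφuω : φ u ≠ ω := by
      intro h
      have : φ u = φ p := by rw [h, hφp]
      exact hup (hφinj this)
    have hφvω : φ v ≠ ω := by
      intro h
      have : φ v = φ p := by rw [h, hφp]
      exact hvp (hφinj this)
    have e1 : crt (S.dist ω) ω u v p ω = (S.dist ω u v, S.dist ω u p, S.dist ω v p) := by
      simp [crt, huω, hvω, hpω]
    have e2 : crt (S.dist ω) ω (φ u) (φ v) (φ p) (φ ω) =
        (S.dist ω (φ u) (φ v), S.dist ω (φ v) p, S.dist ω (φ u) p) := by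
      rw [hφp, hφω]
      simp [crt, hφuω, hφvω, hωp.symm]
    rw [e1, e2] at hPE
    obtain ⟨e, he, h1, h2, h3⟩ := hPE
    simp only at h1 h2 h3
    exact ⟨e, he, h1, h2, h3⟩
  have hc2rω : c (2*r) ≠ ω := (hcm _).2
  have hc2rp : c (2*r) ≠ p := by
    intro h
    have := hcinj (2*r) r h
    linarith
  have hd2rp : S.dist ω (c (2*r)) p = r := by
    rw [hdcp]
    rw [abs_of_nonneg (by linarith)]
    ring
  have hK : ∀ u : X, u ≠ ω → u ≠ p → S.dist ω (φ u) p * S.dist ω u p = r^2 := by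
    intro u huω hup
    by_cases h : u = c (2*r)
    · rw [h, hfix2, hd2rp]
      ring
    · obtain ⟨e, he, h1, h2, h3⟩ := hMB u (c (2*r)) huω hup hc2rω hc2rp h
      -- h2 : d (φ (c 2r)) p = e * d u p, h3 : d (φ u) p = e * d (c 2r) p
      rw [hfix2, hd2rp] at h2
      rw [hd2rp] at h3
      rw [h3]
      nlinarith [h2]
  have hKB : ∀ u v : X, u ≠ ω → u ≠ p → v ≠ ω → v ≠ p → u ≠ v →
      S.dist ω (φ u) (φ v) = r^2 * S.dist ω u v / (S.dist ω u p * S.dist ω v p) := by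
    intro u v huω hup hvω hvp huv
    obtain ⟨e, he, h1, h2, h3⟩ := hMB u v huω hup hvω hvp huv
    have hdup : 0 < S.dist ω u p := S.dist_pos ω u p huω hpω hup
    have hdvp : 0 < S.dist ω v p := S.dist_pos ω v p hvω hpω hvp
    have hKu := hK u huω hup
    rw [h3] at hKu
    have he' : e = r^2 / (S.dist ω u p * S.dist ω v p) := by
      field_simp
      linarith [hKu]
    rw [h1, he']
    ring
  -- the action on the line
  have hφct : ∀ t : ℝ, t ≠ r → φ (c t) = c (r*t/(t - r)) := by
    intro t ht
    have htr : t - r ≠ 0 := sub_ne_zero.2 ht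
    by_cases ht0 : t = 0
    · subst ht0
      rw [hfix0]
      congr 1
      field_simp
      ring
    · obtain ⟨s, hs⟩ := hφc t ht
      have hctω : c t ≠ ω := (hcm t).2
      have hctp : c t ≠ p := by
        intro h
        exact ht (hcinj t r h)
      have e1 : |s - r| * |t - r| = r^2 := by
        have := hK (c t) hctω hctp
        rw [hs, hdcp, hdcp] at this
        exact this
      have hct0 : c t ≠ c 0 := by
        intro h
        exact ht0 (hcinj t 0 h)
      have e2 : |s| * |t - r| = r * |t| := by
        have h9 := hKB (c t) (c 0) hctω hctp hc0ω hc0p hct0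
        rw [hs, hfix0, hunit s 0, hunit t 0, hdcp t, hdcp 0] at h9
        have habs0 : |0 - r| = r := by
          rw [abs_of_nonpos (by linarith)]; ring
        rw [habs0, sub_zero, sub_zero] at h9
        have htr0 : |t - r| ≠ 0 := ne_of_gt (abs_pos.2 htr)
        rw [h9]
        field_simp
      -- algebra: s = r t / (t - r)
      have hA2 : ((s - r)*(t - r))^2 = (r^2)^2 := by
        have : |(s - r)*(t - r)| = r^2 := by rw [abs_mul]; exact e1
        calc ((s-r)*(t-r))^2 = |(s-r)*(t-r)|^2 := (sq_abs _).symm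
        _ = (r^2)^2 := by rw [this]
      have hB2 : (s*(t - r))^2 = (r*t)^2 := by
        have : |s*(t - r)| = r * |t| := by rw [abs_mul]; exact e2
        calc (s*(t-r))^2 = |s*(t-r)|^2 := (sq_abs _).symm
        _ = (r*|t|)^2 := by rw [this]
        _ = (r*t)^2 := by rw [mul_pow, mul_pow, sq_abs]
      set A := (s - r)*(t - r) with hA
      set B := s*(t - r) with hB
      have hBA : B - A = r*(t - r) := by rw [hA, hB]; ring
      have hdiff : (B - A)*(B + A) = r^2*t^2 - (r^2)^2 := by
        have : B^2 - A^2 = (r*t)^2 - (r^2)^2 := by rw [hA2, hB2]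
        nlinarith [this]
      have hfact : (r*(t - r))*(B + A) = (r*(t-r)) * (r*(t+r)) := by
        rw [← hBA]
        rw [hdiff]
        ring
      have hrtr : r*(t - r) ≠ 0 := mul_ne_zero (ne_of_gt hr) htr
      have hsum : B + A = r*(t + r) := mul_left_cancel₀ hrtr hfact
      have hBval : B = r*t := by
        have : B - A = r*(t-r) := hBA
        linarith
      have hsval : s = r*t/(t - r) := by
        rw [eq_div_iff htr]
        rw [hB] at hBval
        exact hBval
      rw [hs, hsval]
  -- conclusion
  refine ⟨φ x, ?_, ?_⟩
  · intro h
    have : φ x = φ p := by rw [h, hφp]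
    exact hxp (hφinj this)
  · intro τ hτ
    have htr : τ - r ≠ 0 := sub_ne_zero.2 hτ
    set u := r*τ/(τ - r) with hu
    have hur : u ≠ r := by
      intro h
      rw [hu] at h
      rw [div_eq_iff htr] at h
      have : r * r = 0 := by linarith [h]
      nlinarith
    have huval : r + r^2/(τ - r) = u := by
      rw [hu]
      field_simp
      ring
    have humr : u - r = r^2/(τ - r) := by
      rw [hu]
      field_simp
      ring
    have hφcu : φ (c u) = c (r*u/(u - r)) := hφct u hur
    have hback : r*u/(u - r) = τ := by
      rw [humr, hu]
      rw [div_eq_iff (by rw [← humr]; exact sub_ne_zero.2 hur)]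
      field_simp
    have hφcuτ : φ (c u) = c τ := by rw [hφcu, hback]
    have hcuω : c u ≠ ω := (hcm u).2
    have hcup : c u ≠ p := fun h => hur (hcinj u r h)
    have hxcu : x ≠ c u := fun h => hxl ⟨u, h.symm⟩
    have := hKB x (c u) hx hxp hcuω hcup hxcu
    rw [hφcuτ] at this
    -- this : d (φ x) (c τ) = r^2 * d x (c u) / (d x p * d (c u) p)
    rw [hdcp u, humr] at this
    have habs : |r^2/(τ - r)| = r^2/|τ - r| := by
      rw [abs_div, abs_of_nonneg (by positivity)]
    rw [habs] at this
    rw [huval]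
    rw [this]
    have hdxp : 0 < S.dist ω x p := S.dist_pos ω x p hx hpω hxp
    have htrpos : 0 < |τ - r| := abs_pos.2 htr
    rw [hp]
    field_simp


set_option maxHeartbeats 2000000 in
/-- a compact Ptolemy space with properties (E) and (sI) is Busemann flat:
for a Ptolemy line `ℓ = σ \ {ω}` with unit speed parameterization `c` and opposite
Busemann functions normalized by `b⁺(c(t)) = -t`, `b⁻(c(t)) = t`, one has
`b⁺ + b⁻ ≡ 0` on `X_ω`. -/
theorem busemann_flat
    {X : Type*} [TopologicalSpace X] [CompactSpace X] [T2Space X]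
    (S : MoebiusStructure X) (hE : S.PropE) (hSI : S.PropSI)
    (ω : X) (σ : Set X) (hσ : S.IsPtolemyCircle σ) (hω : ω ∈ σ)
    (c : ℝ → X) (hrange : Set.range c = σ \ {ω})
    (hunit : ∀ s t : ℝ, S.dist ω (c s) (c t) = |s - t|)
    (bplus bminus : X → ℝ)
    (hbplus : ∀ x, x ≠ ω →
      Tendsto (fun t : ℝ => S.dist ω x (c t) - t) atTop (𝓝 (bplus x)))
    (hbminus : ∀ x, x ≠ ω →
      Tendsto (fun t : ℝ => S.dist ω x (c (-t)) - t) atTop (𝓝 (bminus x)))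
    (hnplus : ∀ t : ℝ, bplus (c t) = -t)
    (hnminus : ∀ t : ℝ, bminus (c t) = t) :
    ∀ x, x ≠ ω → bplus x + bminus x = 0 := by
  intro x hx
  have hcm : ∀ t : ℝ, c t ∈ σ ∧ c t ≠ ω := by
    intro t
    have : c t ∈ Set.range c := ⟨t, rfl⟩
    rw [hrange] at this
    exact ⟨this.1, this.2⟩
  have hcinj : ∀ s t : ℝ, c s = c t → s = t := by
    intro s t h
    have h0 : S.dist ω (c s) (c t) = 0 := by rw [h, S.dist_self]
    rw [hunit] at h0
    have := abs_eq_zero.1 h0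
    linarith
  -- trivial case : x on the line
  by_cases hxl : x ∈ Set.range c
  · obtain ⟨u, rfl⟩ := hxl
    rw [hnplus u, hnminus u]
    ring
  -- Busemann sums are nonnegative
  have hBnn : ∀ v, v ≠ ω → 0 ≤ bplus v + bminus v := by
    intro v hv
    apply ge_of_tendsto ((hbplus v hv).add (hbminus v hv))
    filter_upwards [eventually_ge_atTop (0:ℝ)] with t ht
    have htri := S.dist_triangle ω (c t) v (c (-t)) (hcm t).2 hv (hcm (-t)).2
    rw [hunit t (-t)] at htri
    rw [abs_of_nonneg (by linarith)] at htri
    rw [S.dist_comm ω (c t) v] at htri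
    linarith
  -- Busemann functions are 1-Lipschitz
  have hLipP : ∀ u v : X, u ≠ ω → v ≠ ω → bplus u - bplus v ≤ S.dist ω u v := by
    intro u v hu hv
    apply le_of_tendsto ((hbplus u hu).sub (hbplus v hv))
    filter_upwards with t
    have htri := S.dist_triangle ω u v (c t) hu hv (hcm t).2
    linarith
  have hLipM : ∀ u v : X, u ≠ ω → v ≠ ω → bminus u - bminus v ≤ S.dist ω u v := by
    intro u v hu hv
    apply le_of_tendsto ((hbminus u hu).sub (hbminus v hv))
    filter_upwards with t
    have htri := S.dist_triangle ω u v (c (-t)) hu hv (hcm (-t)).2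
    linarith
  set F : ℝ → ℝ := fun t => S.dist ω x (c t) with hF
  have hFpos : ∀ t : ℝ, 0 < F t :=
    fun t => S.dist_pos ω x (c t) hx (hcm t).2 (fun h => hxl ⟨t, h.symm⟩)
  have hFdiff : ∀ s t : ℝ, F s - F t ≤ |s - t| := by
    intro s t
    have htri := S.dist_triangle ω x (c t) (c s) hx (hcm t).2 (hcm s).2
    rw [hunit t s, abs_sub_comm] at htri
    simp only [hF]
    linarith
  have hconv : ∀ s m t : ℝ, s < m → m < t →
      F m * (t - s) ≤ F s * (t - m) + F t * (m - s) := by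
    intro s m t hsm hmt
    have hp := S.ptolemy ω x (c s) (c m) (c t) hx (hcm s).2 (hcm m).2 (hcm t).2
    rw [hunit s t, hunit m t, hunit s m] at hp
    rw [abs_sub_comm s t, abs_of_pos (by linarith)] at hp
    rw [abs_sub_comm m t, abs_of_pos (by linarith)] at hp
    rw [abs_sub_comm s m, abs_of_pos (by linarith)] at hp
    simp only [hF]
    linarith
  have hstep : ∀ a : ℝ, F (a+1) - F a ≤ F (a+2) - F (a+1) := by
    intro a
    have := hconv a (a+1) (a+2) (by linarith) (by linarith)
    nlinarith [this]
  set bp := bplus x with hbp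
  set C := |bp| + 1 with hC
  have hFb : Tendsto (fun t : ℝ => F t - t) atTop (𝓝 bp) := hbplus x hx
  obtain ⟨T₀, hT₀⟩ : ∃ T₀ : ℝ, ∀ t ≥ T₀, |F t - t| ≤ C := by
    have := (Metric.tendsto_atTop.1 hFb) 1 one_pos
    obtain ⟨N, hN⟩ := this
    refine ⟨N, fun t ht => ?_⟩
    have := hN t ht
    rw [Real.dist_eq] at this
    rw [hC]
    have h1 : |F t - t| - |bp| ≤ |F t - t - bp| := by
      have := abs_sub_abs_le_abs_sub (F t - t) bp
      linarith
    linarith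
  set η : ℕ → ℝ := fun k => 1 - (F ((k:ℝ)+1) - F (k:ℝ)) with hη
  have hηto : Tendsto η atTop (𝓝 0) := by
    have h1 : Tendsto (fun k : ℕ => F (k:ℝ) - (k:ℝ)) atTop (𝓝 bp) :=
      hFb.comp tendsto_natCast_atTop_atTop
    have h2 : Tendsto (fun k : ℕ => F ((k:ℝ)+1) - ((k:ℝ)+1)) atTop (𝓝 bp) :=
      hFb.comp (tendsto_atTop_add_const_right atTop 1 tendsto_natCast_atTop_atTop)
    have := h1.sub h2
    rw [sub_self] at this
    apply this.congr
    intro k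
    simp only [hη]
    ring
  -- the key eventual existence of almost-flat reflected points
  have hEX : ∀ᶠ k : ℕ in atTop, ∃ y : X, y ≠ ω ∧
      bplus y + bminus y ≤ 6 * η k ∧
      ∃ r : ℝ, ((k:ℝ)+1 ≤ r ∧ r ≤ 3*(k:ℝ)) ∧ ∀ τ : ℝ, τ ≠ r →
        S.dist ω y (c τ) = F (r + r^2/(τ - r)) * |τ - r| / F r := by
    have hev1 := eventually_ge_atTop 1
    have hev2 : ∀ᶠ k : ℕ in atTop, T₀ ≤ (k:ℝ) :=
      tendsto_natCast_atTop_atTop.eventually_ge_atTop T₀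
    have hev3 : ∀ᶠ k : ℕ in atTop, 2*C + 2 ≤ (k:ℝ) :=
      tendsto_natCast_atTop_atTop.eventually_ge_atTop (2*C + 2)
    filter_upwards [hev1, hev2, hev3] with k hk1 hkT hkC
    set g : ℕ → ℝ := fun j => F ((k:ℝ) + j + 1) - F ((k:ℝ) + j) with hg
    have hgmono : ∀ i : ℕ, g i ≤ g (i+1) := by
      intro i
      have h1 := hstep ((k:ℝ) + i)
      simp only [hg]
      push_cast
      have e1 : (k:ℝ) + (i + 1) + 1 = ((k:ℝ) + i) + 2 := by ring
      have e2 : (k:ℝ) + (i + 1) = ((k:ℝ) + i) + 1 := by ring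
      rw [e1, e2]
      linarith [h1]
    obtain ⟨j, hjk, hjle⟩ := bus_pigeon g hgmono k (by omega)
    set r : ℝ := (k:ℝ) + 2*(j:ℝ) + 1 with hr
    have hr0 : 0 < r := by positivity
    have hrlb : (k:ℝ) + 1 ≤ r := by
      have : (0:ℝ) ≤ (j:ℝ) := Nat.cast_nonneg j
      rw [hr]; linarith
    have hrub : r ≤ 3*(k:ℝ) := by
      have : (j:ℝ) ≤ (k:ℝ) - 1 := by
        have : (j:ℝ) + 1 ≤ (k:ℝ) := by exact_mod_cast Nat.succ_le_of_lt hjk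
        linarith
      rw [hr]; linarith
    obtain ⟨y, hyω, hyform⟩ :=
      bus_inversion S hSI ω σ hσ hω c hrange hunit x hx hxl r hr0
    refine ⟨y, hyω, ?_, r, ⟨hrlb, hrub⟩, fun τ hτ => hyform τ hτ⟩
    -- now the Busemann sum bound for y
    have hCpos : 0 < C := by rw [hC]; positivity
    have hFrpos := hFpos r
    have hFrlow : r - C ≤ F r := by
      have := hT₀ r (by linarith)
      have := abs_le.1 this
      linarith [this.1]
    have hFr2 : r/2 ≤ F r := by
      have : C ≤ r/2 := by linarith
      linarith
    set D1 : ℝ := F (r+1) - F r with hD1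
    set D2 : ℝ := F r - F (r-1) with hD2
    set Δ : ℝ := D1 - D2 with hΔdef
    have hΔ0 : 0 ≤ Δ := by
      have := hconv (r-1) r (r+1) (by linarith) (by linarith)
      rw [hΔdef, hD1, hD2]
      nlinarith [this]
    -- slope comparison
    have hslope_up : ∀ d : ℝ, 0 < d → d < 1 → F (r + d) - F r ≤ d * D1 := by
      intro d h0 h1
      have hc := hconv r (r + d) (r + 1) (by linarith) (by linarith)
      rw [hD1]
      nlinarith [hc]
    have hslope_dn : ∀ d : ℝ, 0 < d → d < 1 → d * D2 ≤ F r - F (r - d) := by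
      intro d h0 h1
      have hc := hconv (r - 1) (r - d) r (by linarith) (by linarith)
      rw [hD2]
      nlinarith [hc]
    -- eventual bound for the Busemann sum of y
    have hev : ∀ τ : ℝ, τ ≥ r + r^2 + 1 →
        (S.dist ω y (c τ) - τ) + (S.dist ω y (c (-τ)) - τ) ≤ r^2 * Δ / F r := by
      intro τ hτge
      have hτr : 0 < τ - r := by nlinarith
      have hτne : τ ≠ r := by intro h; rw [h] at hτr; simp at hτr
      set δ1 : ℝ := r^2/(τ - r) with hδ1
      set δ2 : ℝ := r^2/(τ + r) with hδ2
      have hδ1pos : 0 < δ1 := by rw [hδ1]; positivity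
      have hδ1lt : δ1 < 1 := by
        rw [hδ1, div_lt_one hτr]; linarith
      have hδ2pos : 0 < δ2 := by
        rw [hδ2]; exact div_pos (by positivity) (by linarith)
      have hδ2lt : δ2 < 1 := by
        rw [hδ2, div_lt_one (by linarith)]; linarith
      have hd1 : S.dist ω y (c τ) = F (r + δ1) * (τ - r) / F r := by
        rw [hyform τ hτne, abs_of_pos hτr, hδ1]
      have hd2 : S.dist ω y (c (-τ)) = F (r - δ2) * (τ + r) / F r := by
        have hτneg : (-τ) ≠ r := by intro h; nlinarith [hr0, hτge]
        have h9 := hyform (-τ) hτneg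
        have harg : r + r^2/(-τ - r) = r - δ2 := by
          rw [hδ2, show -τ - r = -(τ+r) by ring, div_neg]
          ring
        have habs : |-τ - r| = τ + r := by
          rw [abs_of_nonpos (by linarith)]; ring
        rw [h9, harg, habs]
      have hk1' : F (r + δ1) - F r ≤ δ1 * D1 := hslope_up δ1 hδ1pos hδ1lt
      have hk2' : δ2 * D2 ≤ F r - F (r - δ2) := hslope_dn δ2 hδ2pos hδ2lt
      have hδ1τ : δ1 * (τ - r) = r^2 := by
        rw [hδ1]; exact div_mul_cancel₀ _ (ne_of_gt hτr)
      have hδ2τ : δ2 * (τ + r) = r^2 := by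
        rw [hδ2]; exact div_mul_cancel₀ _ (by linarith)
      have key1 : F (r + δ1) * (τ - r) ≤ r^2 * D1 + F r * (τ - r) := by
        have h' := mul_le_mul_of_nonneg_right hk1' (le_of_lt hτr)
        have h'' : δ1 * D1 * (τ - r) = r^2 * D1 := by
          rw [mul_comm δ1 D1, mul_assoc, hδ1τ]; ring
        nlinarith [h', h'']
      have key2 : F (r - δ2) * (τ + r) ≤ -(r^2 * D2) + F r * (τ + r) := by
        have h' := mul_le_mul_of_nonneg_right hk2' (by linarith : (0:ℝ) ≤ τ + r)
        have h'' : δ2 * D2 * (τ + r) = r^2 * D2 := by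
          rw [mul_comm δ2 D2, mul_assoc, hδ2τ]; ring
        nlinarith [h', h'']
      rw [hd1, hd2]
      have hsum : F (r + δ1) * (τ - r) / F r - τ + (F (r - δ2) * (τ + r) / F r - τ) =
          (F (r + δ1) * (τ - r) + F (r - δ2) * (τ + r) - 2*τ*(F r)) / F r := by
        field_simp
        ring
      rw [hsum, div_le_div_iff_of_pos_right hFrpos]
      rw [hΔdef]
      nlinarith [key1, key2]
    have hBy : bplus y + bminus y ≤ r^2 * Δ / F r := by
      apply le_of_tendsto ((hbplus y hyω).add (hbminus y hyω))
      filter_upwards [eventually_ge_atTop (r + r^2 + 1)] with τ hτ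
      exact hev τ hτ
    -- identify the pigeonhole bound
    have hgval1 : g (2*j+1) = F (r+1) - F r := by
      have e1 : (k:ℝ) + ((2*j+1 : ℕ):ℝ) + 1 = r + 1 := by push_cast; rw [hr]; try ring
      have e2 : (k:ℝ) + ((2*j+1 : ℕ):ℝ) = r := by push_cast; rw [hr]; try ring
      simp only [hg]
      rw [e1, e2]
    have hgval0 : g (2*j) = F r - F (r-1) := by
      have e1 : (k:ℝ) + ((2*j : ℕ):ℝ) + 1 = r := by push_cast; rw [hr]; try ring
      have e2 : (k:ℝ) + ((2*j : ℕ):ℝ) = r - 1 := by push_cast; rw [hr]; try ring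
      simp only [hg]
      rw [e1, e2]
    have hg2k : g (2*k) ≤ 1 := by
      simp only [hg]
      have := hFdiff ((k:ℝ) + (2*k:ℕ) + 1) ((k:ℝ) + (2*k:ℕ))
      have habs : |((k:ℝ) + (2*k:ℕ) + 1) - ((k:ℝ) + (2*k:ℕ))| = 1 := by
        rw [show ((k:ℝ) + (2*k:ℕ) + 1) - ((k:ℝ) + (2*k:ℕ)) = 1 by ring, abs_one]
      rw [habs] at this
      linarith
    have hg0 : g 0 = F ((k:ℝ)+1) - F (k:ℝ) := by
      simp only [hg]
      norm_num
    have hΔk : (k:ℝ) * Δ ≤ η k := by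
      rw [hΔdef, hD1, hD2, ← hgval1, ← hgval0]
      have : η k = 1 - g 0 := by rw [hη, hg0]
      rw [this]
      linarith [hjle, hg2k]
    have hηnn : 0 ≤ η k := by
      have hk0 : (0:ℝ) < (k:ℝ) := by exact_mod_cast Nat.pos_of_ne_zero (by omega)
      nlinarith [hΔk, hΔ0]
    calc bplus y + bminus y ≤ r^2 * Δ / F r := hBy
      _ ≤ 6 * η k := by
        rw [div_le_iff₀ hFrpos]
        have hk0 : (0:ℝ) < (k:ℝ) := by exact_mod_cast Nat.pos_of_ne_zero (by omega)
        nlinarith [mul_nonneg (mul_nonneg (sub_nonneg.2 hrub) hr0.le) hΔ0,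
          mul_nonneg (sub_nonneg.2 hΔk) hr0.le,
          mul_nonneg (sub_nonneg.2 hFr2) hηnn]
  classical
  -- choose the sequence of reflected points
  set Y : ℕ → X := fun k => if h : ∃ y : X, y ≠ ω ∧
      bplus y + bminus y ≤ 6 * η k ∧
      ∃ r : ℝ, ((k:ℝ)+1 ≤ r ∧ r ≤ 3*(k:ℝ)) ∧ ∀ τ : ℝ, τ ≠ r →
        S.dist ω y (c τ) = F (r + r^2/(τ - r)) * |τ - r| / F r
    then h.choose else x with hYdef
  have hY : ∀ᶠ k : ℕ in atTop, (Y k ≠ ω ∧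
      bplus (Y k) + bminus (Y k) ≤ 6 * η k ∧
      ∃ r : ℝ, ((k:ℝ)+1 ≤ r ∧ r ≤ 3*(k:ℝ)) ∧ ∀ τ : ℝ, τ ≠ r →
        S.dist ω (Y k) (c τ) = F (r + r^2/(τ - r)) * |τ - r| / F r) := by
    filter_upwards [hEX] with k hk
    simp only [hYdef, dif_pos hk]
    exact hk.choose_spec
  -- a cluster point of the sequence
  obtain ⟨z, -, hz⟩ := isCompact_univ.exists_mapClusterPt (f := atTop) (u := Y)
    (le_principal_iff.2 univ_mem)
  have hfreq : ∀ U ∈ 𝓝 z, ∃ᶠ k in atTop, Y k ∈ U := mapClusterPt_iff_frequently.1 hz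
  have hCpos : 0 < C := by rw [hC]; positivity
  -- convergence of distances to points of the line
  have hdY : ∀ τ : ℝ, Tendsto (fun k : ℕ => S.dist ω (Y k) (c τ)) atTop (𝓝 (F (-τ))) := by
    intro τ
    set A : ℝ := τ^2 + F (-τ) * (C + |τ|) with hA
    have hAnn : 0 ≤ A := by
      have := hFpos (-τ)
      have := abs_nonneg τ
      nlinarith [sq_nonneg τ]
    have hden : Tendsto (fun k : ℕ => (k:ℝ) + 1 - C) atTop atTop := by
      have h' : Tendsto (fun k : ℕ => (k:ℝ) + (1 - C)) atTop atTop :=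
        tendsto_atTop_add_const_right atTop (1-C) tendsto_natCast_atTop_atTop
      exact Tendsto.congr (fun k => by ring) h'
    have hbound : ∀ᶠ k : ℕ in atTop, |S.dist ω (Y k) (c τ) - F (-τ)| ≤ A / ((k:ℝ) + 1 - C) := by
      filter_upwards [hY, tendsto_natCast_atTop_atTop.eventually_ge_atTop T₀,
        tendsto_natCast_atTop_atTop.eventually_ge_atTop C,
        tendsto_natCast_atTop_atTop.eventually_ge_atTop (|τ|)] with k hk hkT hkC hkτ
      obtain ⟨hYω, -, r, ⟨hrlb, hrub⟩, hform⟩ := hk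
      have hrτ : |τ| < r := by linarith
      have hτr : τ < r := lt_of_le_of_lt (le_abs_self τ) hrτ
      have hrFr : |F r - r| ≤ C := hT₀ r (by linarith)
      have hFrpos := hFpos r
      have hFrlow : (k:ℝ) + 1 - C ≤ F r := by
        have := abs_le.1 hrFr
        linarith [this.1]
      have hdenpos : (0:ℝ) < (k:ℝ) + 1 - C := by linarith
      set u : ℝ := r + r^2/(τ - r) with hu
      have hd : S.dist ω (Y k) (c τ) = F u * (r - τ) / F r := by
        rw [hform τ (ne_of_lt hτr), ← hu, abs_of_neg (by linarith : τ - r < 0)]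
        ring_nf
      have husum : u - (-τ) = -(τ^2/(r - τ)) := by
        have h0 : r - τ ≠ 0 := ne_of_gt (by linarith)
        rw [hu]
        rw [show τ - r = -(r - τ) by ring, div_neg]
        field_simp
        ring
      have huabs : |u - (-τ)| = τ^2/(r - τ) := by
        rw [husum, abs_neg, abs_div, abs_of_nonneg (sq_nonneg τ),
          abs_of_pos (by linarith : (0:ℝ) < r - τ)]
      have hFu : |F u - F (-τ)| ≤ τ^2/(r - τ) := by
        rw [← huabs]
        apply abs_le.2
        constructor
        · have := hFdiff (-τ) u
          rw [abs_sub_comm] at this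
          linarith
        · exact hFdiff u (-τ)
      have hnum : |F u * (r - τ) - F (-τ) * F r| ≤ A := by
        have e1 : F u * (r - τ) - F (-τ) * F r =
            (F u - F (-τ)) * (r - τ) + F (-τ) * ((r - τ) - F r) := by ring
        have e2 : |(F u - F (-τ)) * (r - τ)| ≤ τ^2 := by
          rw [abs_mul, abs_of_pos (by linarith : (0:ℝ) < r - τ)]
          calc |F u - F (-τ)| * (r - τ) ≤ (τ^2/(r - τ)) * (r - τ) :=
                mul_le_mul_of_nonneg_right hFu (by linarith)
            _ = τ^2 := div_mul_cancel₀ _ (by linarith)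
        have e3 : |F (-τ) * ((r - τ) - F r)| ≤ F (-τ) * (C + |τ|) := by
          rw [abs_mul, abs_of_pos (hFpos (-τ))]
          apply mul_le_mul_of_nonneg_left _ (hFpos (-τ)).le
          calc |(r - τ) - F r| = |(r - F r) + (-τ)| := by ring_nf
            _ ≤ |r - F r| + |(-τ)| := abs_add_le _ _
            _ ≤ C + |τ| := by
                rw [abs_neg, abs_sub_comm]
                linarith [hrFr]
        calc |F u * (r - τ) - F (-τ) * F r| =
            |(F u - F (-τ)) * (r - τ) + F (-τ) * ((r - τ) - F r)| := by rw [← e1]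
          _ ≤ |(F u - F (-τ)) * (r - τ)| + |F (-τ) * ((r - τ) - F r)| := abs_add_le _ _
          _ ≤ A := by rw [hA]; linarith
      have hdiv : S.dist ω (Y k) (c τ) - F (-τ) = (F u * (r - τ) - F (-τ) * F r) / F r := by
        have hFr0 : F r ≠ 0 := ne_of_gt hFrpos
        rw [hd]
        field_simp
      rw [hdiv, abs_div, abs_of_pos hFrpos]
      calc |F u * (r - τ) - F (-τ) * F r| / F r ≤ A / F r := by gcongr
        _ ≤ A / ((k:ℝ) + 1 - C) := by gcongr
    have h0 : Tendsto (fun k : ℕ => A / ((k:ℝ) + 1 - C)) atTop (𝓝 0) :=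
      tendsto_const_nhds.div_atTop hden
    have hlo : Tendsto (fun k : ℕ => F (-τ) - A / ((k:ℝ) + 1 - C)) atTop (𝓝 (F (-τ))) := by
      simpa using tendsto_const_nhds.sub h0
    have hhi : Tendsto (fun k : ℕ => F (-τ) + A / ((k:ℝ) + 1 - C)) atTop (𝓝 (F (-τ))) := by
      simpa using tendsto_const_nhds.add h0
    apply tendsto_of_tendsto_of_tendsto_of_le_of_le' hlo hhi
    · filter_upwards [hbound] with k hk
      have := abs_le.1 hk
      linarith [this.1]
    · filter_upwards [hbound] with k hk
      have := abs_le.1 hk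
      linarith [(abs_le.1 hk).2]
  -- the cluster point is not ω
  have hzω : z ≠ ω := by
    intro hzeq
    have hU : IsOpen ({v | v ≠ ω ∧ F 0 + 1 < S.dist ω (c 0) v} ∪ {ω}) :=
      S.isOpen_compl_closedBall ω (c 0) (F 0 + 1) (hcm 0).2
    have hmemU : z ∈ ({v | v ≠ ω ∧ F 0 + 1 < S.dist ω (c 0) v} ∪ {ω}) := by
      right; rw [hzeq]; rfl
    have hfr := hfreq _ (hU.mem_nhds hmemU)
    have hevsm : ∀ᶠ k : ℕ in atTop, S.dist ω (Y k) (c 0) < F 0 + 1 := by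
      have h' := hdY 0
      rw [neg_zero] at h'
      exact h'.eventually_lt_const (by linarith)
    obtain ⟨k, hkU, hklt, hkY, -⟩ := (hfr.and_eventually (hevsm.and hY)).exists
    rcases hkU with h | h
    · have h2 := h.2
      rw [S.dist_comm ω (c 0) (Y k)] at h2
      linarith
    · exact hkY h
  -- the cluster point realizes the reflected distances
  have hdz : ∀ τ : ℝ, S.dist ω z (c τ) = F (-τ) := by
    intro τ
    have key : ∀ ε : ℝ, 0 < ε → |S.dist ω z (c τ) - F (-τ)| ≤ 2*ε := by
      intro ε hε
      have hV : IsOpen {v | v ≠ ω ∧ S.dist ω z v < ε} := S.isOpen_ball ω z ε hzω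
      have hfr := hfreq _ (hV.mem_nhds ⟨hzω, by rw [S.dist_self]; exact hε⟩)
      have hev' : ∀ᶠ k : ℕ in atTop, |S.dist ω (Y k) (c τ) - F (-τ)| < ε := by
        obtain ⟨N, hN⟩ := Metric.tendsto_atTop.1 (hdY τ) ε hε
        rw [eventually_atTop]
        exact ⟨N, fun k hk => by have := hN k hk; rwa [Real.dist_eq] at this⟩
      obtain ⟨k, hkV, hkb⟩ := (hfr.and_eventually hev').exists
      obtain ⟨hYkω, hYkd⟩ := hkV
      have ht1 := S.dist_triangle ω z (Y k) (c τ) hzω hYkω (hcm τ).2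
      have ht2 := S.dist_triangle ω (Y k) z (c τ) hYkω hzω (hcm τ).2
      rw [S.dist_comm ω (Y k) z] at ht2
      have habs : |S.dist ω z (c τ) - F (-τ)| ≤
          |S.dist ω z (c τ) - S.dist ω (Y k) (c τ)| + |S.dist ω (Y k) (c τ) - F (-τ)| :=
        abs_sub_le _ _ _
      have h2 : |S.dist ω z (c τ) - S.dist ω (Y k) (c τ)| ≤ S.dist ω z (Y k) :=
        abs_le.2 ⟨by linarith, by linarith⟩
      linarith
    have h0 : |S.dist ω z (c τ) - F (-τ)| ≤ 0 := by
      by_contra h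
      push_neg at h
      have := key (|S.dist ω z (c τ) - F (-τ)|/4) (by linarith)
      linarith
    have := abs_eq_zero.1 (le_antisymm h0 (abs_nonneg _))
    linarith
  -- identify the Busemann functions of z
  have hidp : bplus z = bminus x := by
    have h1 := hbplus z hzω
    have h2 : (fun t : ℝ => S.dist ω z (c t) - t) = (fun t : ℝ => S.dist ω x (c (-t)) - t) := by
      funext t
      rw [hdz t]
    rw [h2] at h1
    exact tendsto_nhds_unique h1 (hbminus x hx)
  have hidm : bminus z = bplus x := by
    have h1 := hbminus z hzω
    have h2 : (fun t : ℝ => S.dist ω z (c (-t)) - t) = (fun t : ℝ => S.dist ω x (c t) - t) := by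
      funext t
      rw [hdz (-t), neg_neg]
    rw [h2] at h1
    exact tendsto_nhds_unique h1 (hbplus x hx)
  -- the Busemann sum of z vanishes
  have hBz : bplus z + bminus z ≤ 0 := by
    have key : ∀ ε : ℝ, 0 < ε → bplus z + bminus z ≤ 3*ε := by
      intro ε hε
      have hV : IsOpen {v | v ≠ ω ∧ S.dist ω z v < ε} := S.isOpen_ball ω z ε hzω
      have hfr := hfreq _ (hV.mem_nhds ⟨hzω, by rw [S.dist_self]; exact hε⟩)
      have hevη : ∀ᶠ k : ℕ in atTop, 6 * η k < ε := by
        have h6 : Tendsto (fun k : ℕ => 6 * η k) atTop (𝓝 0) := by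
          simpa using hηto.const_mul 6
        exact h6.eventually_lt_const hε
      obtain ⟨k, hkV, hkη, hYkω, hkB, -⟩ := (hfr.and_eventually (hevη.and hY)).exists
      obtain ⟨-, hYkd⟩ := hkV
      have l1 := hLipP z (Y k) hzω hYkω
      have l2 := hLipM z (Y k) hzω hYkω
      linarith
    by_contra h
    push_neg at h
    have := key ((bplus z + bminus z)/6) (by linarith)
    linarith
  have hge := hBnn x hx
  have hle : bplus x + bminus x ≤ 0 := by
    rw [← hidm, ← hidp]
    linarith
  linarith
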